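/- In the k-dimensional Gaussian shift experiment, if θ̂_n satisfies the componentwise sparsity condition P_{n,θ}(r(θ̂_n) ≤ r(θ)) → 1 for every θ ∈ ℝ^k (where r(θ)_i = 0 if θ_i = 0 and 1 otherwise), then for every nonzero c ∈ ℝ^k the maximal scaled mean squared error of the linear contrast satisfies sup_{θ∈ℝ^k} E_{n,θ}[n(c'θ̂_n − c'θ)²] → ∞. -/

import Mathlib

open MeasureTheory ProbabilityTheory Filter Topology
open scoped ENNReal NNReal

theorem lintegral_pi_prod' : ∀ {m : ℕ} (μ : Fin m → Measure ℝ),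
    (∀ i, SigmaFinite (μ i)) → ∀ (f : Fin m → ℝ → ENNReal), (∀ i, Measurable (f i)) →
    ∫⁻ x, ∏ i, f i (x i) ∂Measure.pi μ = ∏ i, ∫⁻ y, f i y ∂(μ i) := by
  intro m
  induction m with
  | zero =>
    intro μ _ f _
    simp [lintegral_const, Measure.pi_univ]
  | succ m ih =>
    intro μ hσ f hf
    haveI := hσ
    have hmp := measurePreserving_piFinSuccAbove μ 0
    set e := MeasurableEquiv.piFinSuccAbove (fun _ : Fin (m+1) => ℝ) 0 with he
    have h1 : ∫⁻ x, ∏ i, f i (x i) ∂Measure.pi μ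
        = ∫⁻ z, ∏ i, f i (e.symm z i) ∂((μ 0).prod (Measure.pi fun j => μ (Fin.succAbove 0 j))) := by
      rw [← hmp.map_eq, lintegral_map_equiv]
      simp
    rw [h1]
    have h2 : ∀ z : ℝ × (Fin m → ℝ), ∏ i, f i (e.symm z i)
        = f 0 z.1 * ∏ j, f (Fin.succ j) (z.2 j) := by
      rintro ⟨y, w⟩
      rw [Fin.prod_univ_succ]
      simp [e, MeasurableEquiv.piFinSuccAbove, Fin.insertNthEquiv]
    simp_rw [h2]
    have h3 := lintegral_prod_mul (μ := μ 0) (ν := Measure.pi fun j => μ (Fin.succAbove 0 j))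
      (f := f 0) (g := fun w => ∏ j, f (Fin.succ j) (w j)) ((hf 0).aemeasurable)
      ((Finset.univ.measurable_prod fun j _ =>
        (hf (Fin.succ j)).comp (measurable_pi_apply j)).aemeasurable)
    simp only [Fin.zero_succAbove] at h3 ⊢
    rw [h3, ih (fun j => μ (Fin.succ j)) (fun j => inferInstance) (fun j => f (Fin.succ j))
      (fun j => hf _), Fin.prod_univ_succ]

theorem pi_withDensity' {m : ℕ} (μ : Fin m → Measure ℝ) [∀ i, SigmaFinite (μ i)]
    (f : Fin m → ℝ → ENNReal) (hf : ∀ i, Measurable (f i))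
    (ν : Fin m → Measure ℝ) [∀ i, SigmaFinite (ν i)]
    (hν : ∀ i, ν i = (μ i).withDensity (f i)) :
    Measure.pi ν = (Measure.pi μ).withDensity (fun x => ∏ i, f i (x i)) := by
  refine Measure.pi_eq fun s hs => ?_
  rw [withDensity_apply _ (MeasurableSet.univ_pi hs),
    ← lintegral_indicator (MeasurableSet.univ_pi hs)]
  have hind : ∀ x, (Set.pi Set.univ s).indicator (fun x => ∏ i, f i (x i)) x
      = ∏ i, (s i).indicator (f i) (x i) := by
    intro x
    by_cases hx : x ∈ Set.pi Set.univ s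
    · rw [Set.indicator_of_mem hx]
      exact Finset.prod_congr rfl fun i _ =>
        (Set.indicator_of_mem (hx i (Set.mem_univ i)) _).symm
    · rw [Set.indicator_of_notMem hx]
      rw [Set.mem_univ_pi] at hx
      push_neg at hx
      obtain ⟨i, hi⟩ := hx
      exact (Finset.prod_eq_zero (Finset.mem_univ i) (Set.indicator_of_notMem hi _)).symm
  simp_rw [hind]
  rw [lintegral_pi_prod' μ (fun i => inferInstance) _ (fun i => (hf i).indicator (hs i))]
  refine Finset.prod_congr rfl fun i _ => ?_
  rw [hν i, withDensity_apply _ (hs i), lintegral_indicator (hs i)]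

theorem gaussian_shift_density (m : ℝ) {v : NNReal} (hv : v ≠ 0) :
    gaussianReal m v = (gaussianReal 0 v).withDensity
      (fun x => ENNReal.ofReal (Real.exp ((2*m*x - m^2) / (2*(v:ℝ))))) := by
  rw [gaussianReal_of_var_ne_zero _ hv, gaussianReal_of_var_ne_zero _ hv,
      ← withDensity_mul _ (measurable_gaussianPDF _ _)
        (by fun_prop : Measurable fun x => ENNReal.ofReal (Real.exp ((2*m*x - m^2) / (2*(v:ℝ)))))]
  congr 1
  ext x
  simp only [Pi.mul_apply, gaussianPDF, ← ENNReal.ofReal_mul (gaussianPDFReal_nonneg _ _ _)]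
  congr 1
  unfold gaussianPDFReal
  have hexp : Real.exp (-(x - 0)^2/(2*(v:ℝ))) * Real.exp ((2*m*x - m^2)/(2*(v:ℝ)))
      = Real.exp (-(x-m)^2/(2*(v:ℝ))) := by
    rw [← Real.exp_add, ← add_div]
    congr 1
    ring
  rw [← hexp, ← mul_assoc]

/-- The k-dimensional Gaussian shift experiment: one observation `X ~ N(θ, n⁻¹ I_k)`,
realized as the product of the laws `N(θ i, 1/n)` over the coordinates. -/
noncomputable def shiftP (k n : ℕ) (θ : Fin k → ℝ) : Measure (Fin k → ℝ) :=
  Measure.pi fun i => gaussianReal (θ i) ((n : NNReal))⁻¹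

instance (k n : ℕ) (θ : Fin k → ℝ) : IsProbabilityMeasure (shiftP k n θ) := by
  unfold shiftP; infer_instance

theorem stmt_9 (k : ℕ)
    (est : (n : ℕ) → (Fin k → ℝ) → (Fin k → ℝ))
    (hmeas : ∀ n, Measurable (est n))
    (hsparse : ∀ θ : Fin k → ℝ,
      Tendsto (fun n => shiftP k n θ {x | ∀ i, θ i = 0 → est n x i = 0}) atTop (𝓝 1))
    (c : Fin k → ℝ) (hc : c ≠ 0) :
    Tendsto (fun n : ℕ => ⨆ θ : Fin k → ℝ,
        ∫⁻ x, ENNReal.ofReal ((n : ℝ) * (∑ i, c i * (est n x i - θ i)) ^ 2)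
          ∂(shiftP k n θ))
      atTop (𝓝 ⊤) := by
  obtain ⟨i0, hi0⟩ := Function.ne_iff.mp hc
  rw [Pi.zero_apply] at hi0
  have hA : ∀ n, MeasurableSet {x : Fin k → ℝ | ∀ i, est n x i = 0} := by
    intro n
    have h : {x : Fin k → ℝ | ∀ i, est n x i = 0} = ⋂ i, (fun x => est n x i) ⁻¹' {0} := by
      ext x; simp
    rw [h]
    exact MeasurableSet.iInter fun i =>
      ((measurable_pi_apply i).comp (hmeas n)) (measurableSet_singleton 0)
  have hQ0 : Tendsto (fun n => shiftP k n 0 {x | ∀ i, est n x i = 0}) atTop (𝓝 1) := by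
    simpa using hsparse 0
  have hε : Tendsto (fun n => shiftP k n 0 {x | ∀ i, est n x i = 0}ᶜ) atTop (𝓝 0) := by
    have h1 : ∀ n, shiftP k n 0 {x | ∀ i, est n x i = 0}ᶜ
        = 1 - shiftP k n 0 {x | ∀ i, est n x i = 0} := fun n => prob_compl_eq_one_sub (hA n)
    simp_rw [h1]
    have h2 := ((ENNReal.continuous_sub_left ENNReal.one_ne_top).tendsto 1).comp hQ0
    simpa [Function.comp_def] using h2
  have hIoi : Tendsto (fun t : ℝ => gaussianReal 0 1 (Set.Ioi t)) atTop (𝓝 0) := by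
    have hm : Antitone fun t : ℝ => Set.Ioi t := fun a b hab => Set.Ioi_subset_Ioi hab
    have h := tendsto_measure_iInter_atTop (μ := gaussianReal 0 1)
      (fun t : ℝ => measurableSet_Ioi.nullMeasurableSet) hm ⟨0, measure_ne_top _ _⟩
    have h0 : ⋂ t : ℝ, Set.Ioi t = ∅ := by
      ext y
      simp only [Set.mem_iInter, Set.mem_Ioi, Set.mem_empty_iff_false, iff_false, not_forall,
        not_lt]
      exact ⟨y, le_refl y⟩
    rw [h0] at h
    simpa [Function.comp_def] using h
  rw [ENNReal.tendsto_nhds_top_iff_nnreal]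
  intro x
  obtain ⟨T, hT⟩ := eventually_atTop.mp
    (hIoi.eventually (gt_mem_nhds (by norm_num : (0:ℝ≥0∞) < 4⁻¹)))
  have habs : 0 < |c i0| := abs_pos.mpr hi0
  set t : ℝ := max T (Real.sqrt (2*((x:ℝ)+1)) / |c i0| + 1) with ht_def
  have hsq0 : 0 ≤ Real.sqrt (2*((x:ℝ)+1)) / |c i0| := by positivity
  have ht1 : Real.sqrt (2*((x:ℝ)+1)) / |c i0| + 1 ≤ t := le_max_right _ _
  have ht_pos : 0 < t := lt_of_lt_of_le (by linarith) ht1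
  have hηt : gaussianReal 0 1 (Set.Ioi t) < 4⁻¹ := hT t (le_max_left _ _)
  have ht2 : 2*((x:ℝ)+1) ≤ t^2 * c i0^2 := by
    have h1 : Real.sqrt (2*((x:ℝ)+1)) / |c i0| ≤ t := by linarith
    have h2 : (Real.sqrt (2*((x:ℝ)+1)) / |c i0|)^2 ≤ t^2 := by
      apply pow_le_pow_left₀ hsq0 h1
    have h3 : (Real.sqrt (2*((x:ℝ)+1)))^2 = 2*((x:ℝ)+1) := Real.sq_sqrt (by positivity)
    have h4 : (Real.sqrt (2*((x:ℝ)+1)) / |c i0|)^2 * c i0 ^2 = 2*((x:ℝ)+1) := by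
      rw [div_pow, h3, sq_abs]
      field_simp
    nlinarith [sq_nonneg (c i0)]
  set K : ℝ≥0∞ := ENNReal.ofReal (Real.exp (2*t^2)) with hK_def
  have hK0 : K ≠ 0 := by
    simp only [hK_def, ne_eq, ENNReal.ofReal_eq_zero, not_le]
    exact Real.exp_pos _
  have hKtop : K ≠ ⊤ := ENNReal.ofReal_ne_top
  have hδ : (0:ℝ≥0∞) < K⁻¹ * 4⁻¹ := by
    apply ENNReal.mul_pos
    · simp [ENNReal.inv_ne_zero, hKtop]
    · norm_num
  filter_upwards [eventually_ge_atTop 1, hε.eventually (gt_mem_nhds hδ)] with n hn hεn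
  have hn1 : (1:ℝ) ≤ (n:ℝ) := by exact_mod_cast hn
  have hn0 : (n:ℝ) ≠ 0 := by linarith
  set r : ℝ := Real.sqrt n with hr_def
  have hr : 0 < r := Real.sqrt_pos.mpr (by linarith)
  have hr2 : r^2 = (n:ℝ) := Real.sq_sqrt (by linarith)
  set θn : Fin k → ℝ := fun i => if i = i0 then t / r else 0 with hθn
  have hv : ((n:NNReal))⁻¹ ≠ 0 := by
    rw [ne_eq, inv_eq_zero, Nat.cast_eq_zero]
    omega
  have hvr : (((n:NNReal))⁻¹ : ℝ) = ((n:ℝ))⁻¹ := by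
    push_cast
    ring
  set g : ℝ → ℝ → ℝ≥0∞ :=
    fun m' y => ENNReal.ofReal (Real.exp ((2*m'*y - m'^2) / (2*(((n:NNReal))⁻¹:ℝ)))) with hg
  have hgm : ∀ m', Measurable (g m') := fun m' => by
    simp only [hg]
    fun_prop
  have hQ : shiftP k n θn = (shiftP k n 0).withDensity (fun y => ∏ i, g (θn i) (y i)) := by
    have h0 : shiftP k n 0 = Measure.pi (fun _ : Fin k => gaussianReal 0 ((n:NNReal))⁻¹) := by
      unfold shiftP
      simp
    rw [h0]
    exact pi_withDensity' _ _ (fun i => hgm _) _ (fun i => gaussian_shift_density (θn i) hv)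
  -- risk lower bound
  have hsum : ∀ y ∈ {x : Fin k → ℝ | ∀ i, est n x i = 0},
      ENNReal.ofReal ((n:ℝ) * (∑ i, c i * (est n y i - θn i))^2)
        = ENNReal.ofReal (t^2 * c i0^2) := by
    intro y hy
    have hy' : ∀ i, est n y i = 0 := hy
    have h1 : ∑ i, c i * (est n y i - θn i) = -(c i0 * (t/r)) := by
      have h2 : ∀ i ∈ Finset.univ, c i * (est n y i - θn i)
          = if i = i0 then -(c i * (t/r)) else 0 := by
        intro i _
        rw [hy' i]
        simp only [hθn]
        split_ifs with h <;> ring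
      rw [Finset.sum_congr rfl h2,
        Finset.sum_ite_eq' Finset.univ i0 (fun i => -(c i * (t/r))), if_pos (Finset.mem_univ _)]
    rw [h1]
    congr 1
    rw [neg_sq, mul_pow, div_pow, hr2]
    field_simp
  have hrisk : ENNReal.ofReal (t^2 * c i0^2) * shiftP k n θn {x | ∀ i, est n x i = 0}
      ≤ ∫⁻ y, ENNReal.ofReal ((n:ℝ) * (∑ i, c i * (est n y i - θn i))^2) ∂shiftP k n θn := by
    calc ENNReal.ofReal (t^2*c i0^2) * shiftP k n θn {x | ∀ i, est n x i = 0}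
        = ∫⁻ _ in {x : Fin k → ℝ | ∀ i, est n x i = 0}, ENNReal.ofReal (t^2*c i0^2)
            ∂shiftP k n θn := (setLIntegral_const _ _).symm
      _ = ∫⁻ y in {x : Fin k → ℝ | ∀ i, est n x i = 0},
            ENNReal.ofReal ((n:ℝ) * (∑ i, c i * (est n y i - θn i))^2) ∂shiftP k n θn :=
          setLIntegral_congr_fun (hA n) (fun y hy => (hsum y hy).symm)
      _ ≤ _ := setLIntegral_le_lintegral _ _
  -- measure of complement bound
  set a : ℝ := 2*t/r with ha_def
  have ha' : a = 2*(t/r) := by rw [ha_def]; ring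
  set cyl : Set (Fin k → ℝ) := {x | x i0 ≤ a} with hcyl
  have hcylm : MeasurableSet cyl := (measurable_pi_apply i0) measurableSet_Iic
  have hGle : ∀ y ∈ cyl, (∏ i, g (θn i) (y i)) ≤ K := by
    intro y hy
    have hyle : y i0 ≤ a := hy
    have hone : ∀ i ∈ Finset.univ, i ≠ i0 → g (θn i) (y i) = 1 := by
      intro i _ h
      simp only [hθn, hg, if_neg h]
      norm_num
    rw [Finset.prod_eq_single i0 hone (by simp)]
    simp only [hθn, hg, if_pos rfl, hK_def]
    apply ENNReal.ofReal_le_ofReal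
    apply Real.exp_le_exp.mpr
    rw [hvr, div_le_iff₀ (by positivity : (0:ℝ) < 2*((n:ℝ))⁻¹)]
    have hu : (t/r)^2 * (n:ℝ) = t^2 := by
      rw [div_pow, hr2]
      field_simp
    have h5 : 2*t^2*(2*((n:ℝ))⁻¹) = 4*((t/r)^2) := by
      rw [← hu]
      field_simp
      ring
    have hb1 : 2*(t/r)*(y i0) ≤ 2*(t/r)*(2*(t/r)) := by
      apply mul_le_mul_of_nonneg_left _ (by positivity)
      rw [← ha']
      exact hyle
    nlinarith [sq_nonneg (t/r)]
  have hQcyl : shiftP k n θn cylᶜ < 4⁻¹ := by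
    have hset : cylᶜ = Set.pi Set.univ (fun i => if i = i0 then Set.Ioi a else Set.univ) := by
      ext y
      simp only [hcyl, Set.mem_compl_iff, Set.mem_setOf_eq, not_le, Set.mem_univ_pi]
      constructor
      · intro h i
        by_cases hi : i = i0
        · subst hi; simp [h]
        · simp [hi]
      · intro h
        have := h i0
        simpa using this
    have hpi : shiftP k n θn cylᶜ = gaussianReal (t/r) ((n:NNReal))⁻¹ (Set.Ioi a) := by
      rw [hset]
      unfold shiftP
      rw [Measure.pi_pi]
      rw [Finset.prod_eq_single i0 ?_ (by simp)]
      · simp [hθn]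
      · intro i _ h
        rw [if_neg h]
        simp
    have hmap : gaussianReal (t/r) ((n:NNReal))⁻¹
        = (gaussianReal 0 1).map (fun y : ℝ => r⁻¹ * y + t/r) := by
      have h1 : (gaussianReal 0 1).map (fun y : ℝ => r⁻¹ * y)
          = gaussianReal 0 (⟨(r⁻¹)^2, sq_nonneg _⟩ * 1) := by
        rw [gaussianReal_map_const_mul]
        congr 1
        simp
      have h3 : (gaussianReal 0 1).map (fun y : ℝ => r⁻¹ * y + t/r)
          = ((gaussianReal 0 1).map (fun y : ℝ => r⁻¹ * y)).map (fun y => y + t/r) := by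
        rw [Measure.map_map (measurable_add_const _) (measurable_const_mul _)]
        rfl
      rw [h3, h1, gaussianReal_map_add_const, zero_add]
      congr 1
      apply NNReal.coe_injective
      simp only [NNReal.coe_mul, NNReal.coe_one, NNReal.coe_mk, NNReal.coe_inv,
        NNReal.coe_natCast]
      change _ = (r⁻¹)^2 * 1
      rw [mul_one, inv_pow, hr2]
    have hpre : (fun y : ℝ => r⁻¹ * y + t/r) ⁻¹' (Set.Ioi a) = Set.Ioi t := by
      ext y
      simp only [Set.mem_preimage, Set.mem_Ioi, ha_def]
      have he1 : r⁻¹ * y + t/r = (y+t)/r := by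
        field_simp
      rw [he1, div_lt_div_iff_of_pos_right hr]
      constructor <;> intro h <;> linarith
    rw [hpi, hmap, Measure.map_apply (by fun_prop) measurableSet_Ioi, hpre]
    exact hηt
  have hcompl : shiftP k n θn {x | ∀ i, est n x i = 0}ᶜ ≤ 2⁻¹ := by
    have hGmeas : Measurable fun y : Fin k → ℝ => ∏ i, g (θn i) (y i) :=
      Finset.univ.measurable_prod fun i _ => (hgm _).comp (measurable_pi_apply i)
    have h1 : shiftP k n θn {x | ∀ i, est n x i = 0}ᶜ
        = ∫⁻ y in {x : Fin k → ℝ | ∀ i, est n x i = 0}ᶜ, (∏ i, g (θn i) (y i)) ∂shiftP k n 0 := by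
      rw [hQ, withDensity_apply _ (hA n).compl]
    have h2 : ∫⁻ y in {x : Fin k → ℝ | ∀ i, est n x i = 0}ᶜ,
          (∏ i, g (θn i) (y i)) ∂shiftP k n 0
        ≤ ∫⁻ y in ({x : Fin k → ℝ | ∀ i, est n x i = 0}ᶜ ∩ cyl) ∪ cylᶜ,
            (∏ i, g (θn i) (y i)) ∂shiftP k n 0 := by
      apply lintegral_mono_set
      intro y hy
      by_cases hy' : y ∈ cyl
      · exact Or.inl ⟨hy, hy'⟩
      · exact Or.inr hy'
    have h3 := lintegral_union_le (μ := shiftP k n 0)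
      (fun y : Fin k → ℝ => ∏ i, g (θn i) (y i))
      ({x : Fin k → ℝ | ∀ i, est n x i = 0}ᶜ ∩ cyl) cylᶜ
    have h4 : ∫⁻ y in {x : Fin k → ℝ | ∀ i, est n x i = 0}ᶜ ∩ cyl,
          (∏ i, g (θn i) (y i)) ∂shiftP k n 0
        ≤ K * shiftP k n 0 {x | ∀ i, est n x i = 0}ᶜ := by
      calc ∫⁻ y in {x : Fin k → ℝ | ∀ i, est n x i = 0}ᶜ ∩ cyl,
            (∏ i, g (θn i) (y i)) ∂shiftP k n 0
          ≤ ∫⁻ _ in {x : Fin k → ℝ | ∀ i, est n x i = 0}ᶜ ∩ cyl, K ∂shiftP k n 0 :=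
            setLIntegral_mono measurable_const fun y hy => hGle y hy.2
        _ = K * shiftP k n 0 ({x : Fin k → ℝ | ∀ i, est n x i = 0}ᶜ ∩ cyl) :=
            setLIntegral_const _ _
        _ ≤ K * shiftP k n 0 {x | ∀ i, est n x i = 0}ᶜ := by
            gcongr
            exact Set.inter_subset_left
    have h5 : ∫⁻ y in cylᶜ, (∏ i, g (θn i) (y i)) ∂shiftP k n 0 = shiftP k n θn cylᶜ := by
      rw [hQ, withDensity_apply _ hcylm.compl]
    have h44 : (4:ℝ≥0∞)⁻¹ + 4⁻¹ = 2⁻¹ := by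
      have h45 : ((4:ℝ≥0∞)⁻¹ + 4⁻¹) = 2 * 4⁻¹ := by ring
      rw [h45, show (4:ℝ≥0∞) = 2 * 2 by norm_num, ENNReal.mul_inv (by norm_num) (by norm_num),
        ← mul_assoc, ENNReal.mul_inv_cancel (by norm_num) (by norm_num), one_mul]
    calc shiftP k n θn {x | ∀ i, est n x i = 0}ᶜ
        ≤ K * shiftP k n 0 {x | ∀ i, est n x i = 0}ᶜ + shiftP k n θn cylᶜ := by
          rw [h1]
          exact le_trans h2 (le_trans h3 (add_le_add h4 (le_of_eq h5)))
      _ ≤ K * (K⁻¹ * 4⁻¹) + 4⁻¹ := add_le_add (mul_le_mul_right hεn.le K) hQcyl.le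
      _ = 4⁻¹ + 4⁻¹ := by
          rw [← mul_assoc, ENNReal.mul_inv_cancel hK0 hKtop, one_mul]
      _ = 2⁻¹ := h44
  have hQA : 2⁻¹ ≤ shiftP k n θn {x | ∀ i, est n x i = 0} := by
    have h1 : (1:ℝ≥0∞) - 2⁻¹ ≤ shiftP k n θn {x | ∀ i, est n x i = 0} := by
      apply tsub_le_iff_right.mpr
      have h2 : (1:ℝ≥0∞) = shiftP k n θn Set.univ := measure_univ.symm
      rw [h2, ← Set.union_compl_self {x : Fin k → ℝ | ∀ i, est n x i = 0}]
      exact le_trans (measure_union_le _ _) (add_le_add_right hcompl _)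
    rwa [ENNReal.one_sub_inv_two] at h1
  calc (x:ℝ≥0∞) < ENNReal.ofReal ((x:ℝ)+1) := by
        rw [← ENNReal.ofReal_coe_nnreal]
        exact (ENNReal.ofReal_lt_ofReal_iff (by positivity)).mpr (by linarith [x.coe_nonneg])
    _ = ENNReal.ofReal (2*((x:ℝ)+1)) * 2⁻¹ := by
        rw [ENNReal.ofReal_mul (by norm_num : (0:ℝ) ≤ 2), ENNReal.ofReal_ofNat,
          mul_comm (2:ℝ≥0∞), mul_assoc, ENNReal.mul_inv_cancel two_ne_zero (by norm_num),
          mul_one]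
    _ ≤ ENNReal.ofReal (t^2 * c i0^2) * 2⁻¹ :=
        mul_le_mul_left (ENNReal.ofReal_le_ofReal ht2) _
    _ ≤ ENNReal.ofReal (t^2 * c i0^2) * shiftP k n θn {x | ∀ i, est n x i = 0} :=
        mul_le_mul_right hQA _
    _ ≤ ∫⁻ y, ENNReal.ofReal ((n:ℝ) * (∑ i, c i * (est n y i - θn i))^2) ∂shiftP k n θn := hrisk
    _ ≤ ⨆ θ : Fin k → ℝ, ∫⁻ y, ENNReal.ofReal ((n:ℝ) * (∑ i, c i * (est n y i - θ i))^2)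
          ∂shiftP k n θ :=
        le_iSup (fun θ : Fin k → ℝ =>
          ∫⁻ y, ENNReal.ofReal ((n:ℝ) * (∑ i, c i * (est n y i - θ i))^2) ∂shiftP k n θ) θn
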